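/- arXiv:1804.05433 — 5 statements merged into one kernel-verified Lean document; each statement's English description precedes it below -/
import Mathlib

section
/- Let A, B, δ be nonnegative real numbers satisfying |A² − B²| ≤ δ(1 + B)(δ + A). Then max(A, 1) ≤ (1 + 4δ) · max(B, 1). -/
/-- Deterministic core of Corollary 2.2: if `|A² − B²| ≤ δ(1 + B)(δ + A)` for
nonnegative reals `A, B, δ`, then `max(A, 1) ≤ (1 + 4δ) · max(B, 1)`. -/
theorem stmt_0 (A B δ : ℝ) (hA : 0 ≤ A) (hB : 0 ≤ B) (hδ : 0 ≤ δ)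
    (h : |A ^ 2 - B ^ 2| ≤ δ * (1 + B) * (δ + A)) :
    max A 1 ≤ (1 + 4 * δ) * max B 1 := by
  set M := max B 1 with hM
  have hM1 : (1 : ℝ) ≤ M := le_max_right _ _
  have hBM : B ≤ M := le_max_left _ _
  have h' : A ^ 2 - B ^ 2 ≤ δ * (1 + B) * (δ + A) := le_trans (le_abs_self _) h
  apply max_le
  · by_contra hc
    push_neg at hc
    have hM0 : (0:ℝ) ≤ M := le_trans zero_le_one hM1
    have h1 : (1+2*δ)*M < A - 2*δ*M := by nlinarith
    have h2 := mul_lt_mul'' hc h1 (by positivity) (by positivity)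
    have hB2 : B^2 ≤ M^2 := by nlinarith
    have hd : δ*(1+B) ≤ 2*δ*M := by nlinarith
    have hd2 := mul_le_mul_of_nonneg_right hd (by linarith : (0:ℝ) ≤ δ + A)
    nlinarith [h2, hB2, hd2, mul_nonneg (mul_nonneg hδ hδ) hM0,
      mul_nonneg (mul_nonneg hδ hM0) hM0, mul_nonneg (mul_nonneg (mul_nonneg hδ hδ) hM0) (by linarith : (0:ℝ) ≤ M - 1)]
  · nlinarith
end

section
/- Let A, B, δ be nonnegative real numbers satisfying |A² − B²| ≤ δ(1 + B)(δ + A). Then max(B, 1) ≤ (1 + 4·max(√δ, δ²)) · max(A, 1). -/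
/-- Deterministic core of Corollary 2.2: if `|A² − B²| ≤ δ(1 + B)(δ + A)` for
nonnegative reals `A, B, δ`, then `max(B, 1) ≤ (1 + 4·max(√δ, δ²)) · max(A, 1)`. -/
theorem stmt_1 (A B δ : ℝ) (hA : 0 ≤ A) (hB : 0 ≤ B) (hδ : 0 ≤ δ)
    (h : |A ^ 2 - B ^ 2| ≤ δ * (1 + B) * (δ + A)) :
    max B 1 ≤ (1 + 4 * max (Real.sqrt δ) (δ ^ 2)) * max A 1 := by
  set c := max (Real.sqrt δ) (δ ^ 2) with hc
  have hc0 : 0 ≤ c := le_trans (Real.sqrt_nonneg δ) (le_max_left _ _)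
  have hs : Real.sqrt δ ^ 2 = δ := Real.sq_sqrt hδ
  have hδc : δ ≤ c := by
    rcases le_or_gt δ 1 with h1 | h1
    · have : δ ≤ Real.sqrt δ := by nlinarith [Real.sqrt_nonneg δ]
      exact this.trans (le_max_left _ _)
    · have : δ ≤ δ ^ 2 := by nlinarith
      exact this.trans (le_max_right _ _)
  have hδ2c : δ ^ 2 ≤ c := by
    rcases le_or_gt δ 1 with h1 | h1
    · have hds : δ ≤ Real.sqrt δ := by nlinarith [Real.sqrt_nonneg δ]
      have : δ ^ 2 ≤ Real.sqrt δ := by nlinarith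
      exact this.trans (le_max_left _ _)
    · exact le_max_right _ _
  have hMA : A ≤ max A 1 := le_max_left _ _
  have hM1 : (1:ℝ) ≤ max A 1 := le_max_right _ _
  rcases le_or_gt B 1 with hB1 | hB1
  · rw [max_eq_right hB1]; nlinarith
  · rw [max_eq_left hB1.le]
    have key : B ≤ A + 2*δ^2 + 2*δ*A := by
      rcases le_or_gt B A with hBA | hBA
      · nlinarith
      · have h2 : B^2 - A^2 ≤ 2*δ*B*(δ+A) := by
          have hBB : -(A^2 - B^2) ≤ |A^2 - B^2| := neg_le_abs _
          nlinarith [mul_nonneg hδ (by linarith : (0:ℝ) ≤ δ + A)]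
        nlinarith [mul_pos (sub_pos.mpr hBA) (by linarith : (0:ℝ) < B),
          mul_nonneg (le_of_lt (sub_pos.mpr hBA)) hA]
    nlinarith
end

section
/- Let A, B, δ be nonnegative real numbers satisfying |A² − B²| ≤ δ(1 + B)(δ + A), and assume in addition δ ≤ 1. Then (1/5)·max(A, 1) ≤ max(B, 1) ≤ 5·max(A, 1). -/
/-- Deterministic core of Corollary 2.2, two-sided form: if `|A² − B²| ≤ δ(1 + B)(δ + A)`
for nonnegative reals `A, B, δ` with `δ ≤ 1`, then `(1/5)·max(A,1) ≤ max(B,1) ≤ 5·max(A,1)`. -/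
theorem stmt_2 (A B δ : ℝ) (hA : 0 ≤ A) (hB : 0 ≤ B) (hδ : 0 ≤ δ) (hδ1 : δ ≤ 1)
    (h : |A ^ 2 - B ^ 2| ≤ δ * (1 + B) * (δ + A)) :
    (1 / 5) * max A 1 ≤ max B 1 ∧ max B 1 ≤ 5 * max A 1 := by
  rw [abs_le] at h
  obtain ⟨h1, h2⟩ := h
  have e1 : 0 ≤ 1 + A - δ * (δ + A) := by nlinarith
  have hbd : δ * (1 + B) * (δ + A) ≤ (1 + B) * (1 + A) := by
    nlinarith [mul_nonneg (show (0:ℝ) ≤ 1 + B by linarith) e1]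
  constructor
  · rcases le_total A 1 with hA1 | hA1
    · rw [max_eq_right hA1]
      have := le_max_right B 1
      linarith
    · rw [max_eq_left hA1]
      have hb := le_max_left B 1
      have hb1 := le_max_right B 1
      nlinarith [sq_nonneg (A - 3 * max B 1), mul_nonneg (sub_nonneg.2 hb1) (sub_nonneg.2 hA1)]
  · rcases le_total B 1 with hB1 | hB1
    · rw [max_eq_right hB1]
      have := le_max_right A 1
      linarith
    · rw [max_eq_left hB1]
      have ha := le_max_left A 1
      have ha1 := le_max_right A 1
      nlinarith [sq_nonneg (B - 3 * max A 1), mul_nonneg (sub_nonneg.2 ha1) (sub_nonneg.2 hB1)]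
end

section
/- Let μ : ℕ → ℝ be a summable sequence with μ(i) ≥ 0 for all i, and for λ > 0 define the effective dimension N(λ) = ∑' i, μ(i)/(μ(i) + λ). Then for every q > 1 and every λ > 0 one has q⁻¹·max(N(λ), 1) < max(N(qλ), 1). -/
/-- Key step toward the grid-regularity inequality (3.6): for the effective dimension
`N(λ) = ∑' i, μ(i)/(μ(i) + λ)` one has `q⁻¹·max(N(λ), 1) < max(N(qλ), 1)` for all
`q > 1` and `λ > 0`. -/
theorem stmt_8 (μ : ℕ → ℝ) (hsum : Summable μ) (hpos : ∀ i, 0 ≤ μ i) :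
    ∀ q : ℝ, 1 < q → ∀ lam : ℝ, 0 < lam →
      q⁻¹ * max (∑' i, μ i / (μ i + lam)) 1 < max (∑' i, μ i / (μ i + q * lam)) 1 := by
  intro q hq lam hlam
  have hq0 : (0:ℝ) < q := lt_trans one_pos hq
  have hql : 0 < q * lam := mul_pos hq0 hlam
  have hden : ∀ i, 0 < μ i + q * lam := fun i =>
    add_pos_of_nonneg_of_pos (hpos i) hql
  have hden1 : ∀ i, 0 < μ i + lam := fun i =>
    add_pos_of_nonneg_of_pos (hpos i) hlam
  have hinv1 : q⁻¹ < 1 := inv_lt_one_of_one_lt₀ hq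
  by_cases hz : ∀ i, μ i = 0
  · simp only [hz, zero_div, tsum_zero]
    simpa using hinv1
  · push_neg at hz
    obtain ⟨i₀, hi₀⟩ := hz
    have hi₀pos : 0 < μ i₀ := lt_of_le_of_ne (hpos i₀) (Ne.symm hi₀)
    have hsum2 : Summable (fun i => μ i / (μ i + q * lam)) := by
      apply Summable.of_nonneg_of_le (fun i => div_nonneg (hpos i) (hden i).le)
        (fun i => ?_) (hsum.div_const (q * lam))
      exact div_le_div_of_nonneg_left (hpos i) hql (le_add_of_nonneg_left (hpos i))
    have hsum1 : Summable (fun i => μ i / (μ i + lam) / q) := by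
      apply Summable.div_const
      apply Summable.of_nonneg_of_le (fun i => div_nonneg (hpos i) (hden1 i).le)
        (fun i => ?_) (hsum.div_const lam)
      exact div_le_div_of_nonneg_left (hpos i) hlam (le_add_of_nonneg_left (hpos i))
    have hle : ∀ i, μ i / (μ i + lam) / q ≤ μ i / (μ i + q * lam) := by
      intro i
      rw [div_div]
      apply div_le_div_of_nonneg_left (hpos i) (hden i)
      have : μ i + q * lam ≤ q * μ i + q * lam := by nlinarith [hpos i]
      nlinarith
    have hstrict : μ i₀ / (μ i₀ + lam) / q < μ i₀ / (μ i₀ + q * lam) := by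
      rw [div_div]
      apply div_lt_div_of_pos_left hi₀pos (hden i₀)
      nlinarith
    have key : (∑' i, μ i / (μ i + lam)) / q < ∑' i, μ i / (μ i + q * lam) := by
      rw [← tsum_div_const]
      exact Summable.tsum_lt_tsum hle hstrict hsum1 hsum2
    have h2 : (1:ℝ) / q < 1 := by rw [one_div]; exact hinv1
    rw [mul_comm, max_mul_of_nonneg _ _ (inv_nonneg.mpr hq0.le)]
    apply max_lt
    · calc (∑' i, μ i / (μ i + lam)) * q⁻¹ = (∑' i, μ i / (μ i + lam)) / q := by
            rw [div_eq_mul_inv]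
        _ < ∑' i, μ i / (μ i + q * lam) := key
        _ ≤ _ := le_max_left _ _
    · calc 1 * q⁻¹ = 1 / q := by rw [one_mul, one_div]
        _ < 1 := h2
        _ ≤ _ := le_max_right _ _
end

section
/- Let q > 1 and s ∈ [0, 1/2]. Let Ã, S̃ : (0, ∞) → ℝ be nonnegative functions such that Ã is nondecreasing, S̃ is nonincreasing, the map λ ↦ λ^s·S̃(λ) is nonincreasing, and S̃(λ) ≤ q·S̃(q·λ) for every λ > 0. Suppose there are 0 < λ⋆ < λ⋆⋆ ≤ q·λ⋆ with Ã(λ⋆) ≤ S̃(λ⋆) and S̃(λ⋆⋆) ≤ Ã(λ⋆⋆). Then for every λ > 0 one has λ⋆^s·S̃(λ⋆) ≤ q^{1−s}·λ^s·( Ã(λ) + S̃(λ) ). -/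
/-- Deterministic content of Lemma 3.8 (oracle inequality for the balancing principle):
if `Ã` is nondecreasing and `S̃` nonincreasing on `(0,∞)`, both nonnegative, with
`λ ↦ λ^s·S̃(λ)` nonincreasing and `S̃(λ) ≤ q·S̃(qλ)`, and `λ⋆ < λ⋆⋆ ≤ qλ⋆` satisfy
`Ã(λ⋆) ≤ S̃(λ⋆)` and `S̃(λ⋆⋆) ≤ Ã(λ⋆⋆)`, then
`λ⋆^s·S̃(λ⋆) ≤ q^{1−s}·λ^s·(Ã(λ) + S̃(λ))` for every `λ > 0`. -/
theorem stmt_12 (q s : ℝ) (hq : 1 < q) (hs : s ∈ Set.Icc (0 : ℝ) (1 / 2))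
    (A S : ℝ → ℝ)
    (hA0 : ∀ lam > (0 : ℝ), 0 ≤ A lam) (hS0 : ∀ lam > (0 : ℝ), 0 ≤ S lam)
    (hAmono : MonotoneOn A (Set.Ioi 0)) (hSanti : AntitoneOn S (Set.Ioi 0))
    (hlamS : AntitoneOn (fun lam : ℝ => lam ^ s * S lam) (Set.Ioi 0))
    (hSq : ∀ lam > (0 : ℝ), S lam ≤ q * S (q * lam))
    (lamstar lamss : ℝ) (h0 : 0 < lamstar) (h1 : lamstar < lamss) (h2 : lamss ≤ q * lamstar)
    (h3 : A lamstar ≤ S lamstar) (h4 : S lamss ≤ A lamss) :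
    ∀ lam > (0 : ℝ), lamstar ^ s * S lamstar ≤ q ^ (1 - s) * (lam ^ s * (A lam + S lam)) := by
  obtain ⟨hs0, hs2⟩ := hs
  intro lam hlam
  have hq0 : (0:ℝ) < q := lt_trans one_pos hq
  have hss : 0 < lamss := h0.trans h1
  have hql : 0 < q * lamstar := mul_pos hq0 h0
  have hK : lamstar ^ s * S lamstar ≤ q ^ (1 - s) * (lamss ^ s * S lamss) := by
    have h5 : S lamstar ≤ q * S (q * lamstar) := hSq lamstar h0
    have h6 : (q * lamstar) ^ s * S (q * lamstar) ≤ lamss ^ s * S lamss :=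
      hlamS (Set.mem_Ioi.2 hss) (Set.mem_Ioi.2 hql) h2
    have h7 : (q * lamstar) ^ s = q ^ s * lamstar ^ s :=
      Real.mul_rpow hq0.le h0.le
    have h8 : q ^ (1 - s) * q ^ s = q := by
      rw [← Real.rpow_add hq0]; simp
    calc lamstar ^ s * S lamstar ≤ lamstar ^ s * (q * S (q * lamstar)) :=
          mul_le_mul_of_nonneg_left h5 (Real.rpow_nonneg h0.le s)
      _ = (q ^ (1 - s) * q ^ s) * (lamstar ^ s * S (q * lamstar)) := by
          rw [h8]; ring
      _ = q ^ (1 - s) * ((q * lamstar) ^ s * S (q * lamstar)) := by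
          rw [h7]; ring
      _ ≤ q ^ (1 - s) * (lamss ^ s * S lamss) :=
          mul_le_mul_of_nonneg_left h6 (by positivity)
  rcases le_or_gt lam lamss with hle | hgt
  · have h9 : lamss ^ s * S lamss ≤ lam ^ s * S lam :=
      hlamS (Set.mem_Ioi.2 hlam) (Set.mem_Ioi.2 hss) hle
    have hAn : 0 ≤ A lam := hA0 lam hlam
    calc lamstar ^ s * S lamstar ≤ q ^ (1 - s) * (lamss ^ s * S lamss) := hK
      _ ≤ q ^ (1 - s) * (lam ^ s * S lam) :=
          mul_le_mul_of_nonneg_left h9 (by positivity)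
      _ ≤ q ^ (1 - s) * (lam ^ s * (A lam + S lam)) := by
          apply mul_le_mul_of_nonneg_left _ (by positivity)
          apply mul_le_mul_of_nonneg_left _ (Real.rpow_nonneg hlam.le s)
          linarith
  · have h10 : A lamss ≤ A lam := hAmono (Set.mem_Ioi.2 hss) (Set.mem_Ioi.2 hlam) hgt.le
    have hAn : 0 ≤ A lam := hA0 lam hlam
    have h11 : lamss ^ s ≤ lam ^ s := Real.rpow_le_rpow hss.le hgt.le hs0
    have hSn : 0 ≤ S lam := hS0 lam hlam
    have key : lamss ^ s * S lamss ≤ lam ^ s * A lam := by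
      calc lamss ^ s * S lamss ≤ lamss ^ s * A lam :=
            mul_le_mul_of_nonneg_left (h4.trans h10) (by positivity)
        _ ≤ lam ^ s * A lam := mul_le_mul_of_nonneg_right h11 hAn
    calc lamstar ^ s * S lamstar ≤ q ^ (1 - s) * (lamss ^ s * S lamss) := hK
      _ ≤ q ^ (1 - s) * (lam ^ s * A lam) :=
          mul_le_mul_of_nonneg_left key (by positivity)
      _ ≤ q ^ (1 - s) * (lam ^ s * (A lam + S lam)) := by
          apply mul_le_mul_of_nonneg_left _ (by positivity)
          apply mul_le_mul_of_nonneg_left _ (Real.rpow_nonneg hlam.le s)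
          linarith
end
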